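/- arXiv:1907.07139 — 6 statements merged into one kernel-verified Lean document; each statement's English description precedes it below -/
import Mathlib

section
/- For m = 3 (so n = 8), the constant κ_3 equals 2·ln 2 + √2·ln(1+√2); that is, 4·∫₀¹ (1−x³)²/(1−x⁸) dx = 2·ln 2 + √2·ln(1+√2). -/
open Real

noncomputable def Fk (x : ℝ) : ℝ :=
  (1/2) * Real.log (1+x) + (1/4) * Real.log (1+x^2)
    - (2+Real.sqrt 2)/8 * Real.log (x^2 - Real.sqrt 2 * x + 1)
    - (2-Real.sqrt 2)/8 * Real.log (x^2 + Real.sqrt 2 * x + 1)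

lemma hs2 : Real.sqrt 2 ^ 2 = 2 := Real.sq_sqrt (by norm_num)

lemma quad1_pos (x : ℝ) : 0 < x^2 - Real.sqrt 2 * x + 1 := by
  nlinarith [sq_nonneg (2*x - Real.sqrt 2), hs2]

lemma quad2_pos (x : ℝ) : 0 < x^2 + Real.sqrt 2 * x + 1 := by
  nlinarith [sq_nonneg (2*x + Real.sqrt 2), hs2]

lemma Fk_deriv {x : ℝ} (hx : x ∈ Set.Ioo (0:ℝ) 1) :
    HasDerivAt Fk ((1-x)*(1+x+x^2)^2 / ((1+x)*(1+x^2)*(1+x^4))) x := by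
  obtain ⟨hx0, hx1⟩ := hx
  have h1 : (0:ℝ) < 1 + x := by linarith
  have h2 : (0:ℝ) < 1 + x^2 := by positivity
  have h3 := quad1_pos x
  have h4 := quad2_pos x
  have h5 : (0:ℝ) < 1 + x^4 := by positivity
  set s := Real.sqrt 2 with hsdef
  have d1 : HasDerivAt (fun y : ℝ => Real.log (1+y)) (1/(1+x)) x := by
    simpa using ((hasDerivAt_id x).const_add 1).log h1.ne'
  have d2 : HasDerivAt (fun y : ℝ => Real.log (1+y^2)) (2*x/(1+x^2)) x := by
    simpa using ((hasDerivAt_pow 2 x).const_add 1).log h2.ne'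
  have p3 : HasDerivAt (fun y : ℝ => y^2 - s*y + 1) (2*x - s) x := by
    simpa using (((hasDerivAt_pow 2 x).sub ((hasDerivAt_id x).const_mul s)).add_const 1)
  have d3 : HasDerivAt (fun y : ℝ => Real.log (y^2 - s*y + 1)) ((2*x-s)/(x^2-s*x+1)) x :=
    p3.log h3.ne'
  have p4 : HasDerivAt (fun y : ℝ => y^2 + s*y + 1) (2*x + s) x := by
    simpa using (((hasDerivAt_pow 2 x).add ((hasDerivAt_id x).const_mul s)).add_const 1)
  have d4 : HasDerivAt (fun y : ℝ => Real.log (y^2 + s*y + 1)) ((2*x+s)/(x^2+s*x+1)) x :=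
    p4.log h4.ne'
  have D := (((d1.const_mul ((1:ℝ)/2)).add (d2.const_mul ((1:ℝ)/4))).sub
      (d3.const_mul ((2+s)/8))).sub (d4.const_mul ((2-s)/8))
  have key : (1/2) * (1/(1+x)) + (1/4) * (2*x/(1+x^2)) - (2+s)/8 * ((2*x-s)/(x^2-s*x+1))
      - (2-s)/8 * ((2*x+s)/(x^2+s*x+1))
      = (1-x)*(1+x+x^2)^2 / ((1+x)*(1+x^2)*(1+x^4)) := by
    have hs : s^2 = 2 := hs2
    have h3' : x * (x - s) + 1 ≠ 0 := by nlinarith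
    have h4' : x * (x + s) + 1 ≠ 0 := by nlinarith
    field_simp
    linear_combination (16 + 48*x + 64*x^2 + 64*x^3 + 32*x^4 - 32*x^5 - 64*x^6 - 64*x^7 - 48*x^8 - 16*x^9) * hs
  rw [key] at D
  unfold Fk
  exact D

lemma g_contOn : ContinuousOn (fun x : ℝ => (1-x)*(1+x+x^2)^2/((1+x)*(1+x^2)*(1+x^4)))
    (Set.Icc (0:ℝ) 1) := by
  apply ContinuousOn.div (by fun_prop) (by fun_prop)
  intro x hx
  have hx0 := hx.1
  positivity

lemma Fk_contOn : ContinuousOn Fk (Set.Icc (0:ℝ) 1) := by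
  unfold Fk
  have l1 : ContinuousOn (fun x : ℝ => Real.log (1+x)) (Set.Icc (0:ℝ) 1) := by
    apply ContinuousOn.log (by fun_prop)
    intro x hx; have := hx.1; positivity
  have l2 : ContinuousOn (fun x : ℝ => Real.log (1+x^2)) (Set.Icc (0:ℝ) 1) := by
    apply ContinuousOn.log (by fun_prop)
    intro x hx; positivity
  have l3 : ContinuousOn (fun x : ℝ => Real.log (x^2 - Real.sqrt 2 * x + 1)) (Set.Icc (0:ℝ) 1) := by
    apply ContinuousOn.log (by fun_prop)
    intro x hx; exact (quad1_pos x).ne'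
  have l4 : ContinuousOn (fun x : ℝ => Real.log (x^2 + Real.sqrt 2 * x + 1)) (Set.Icc (0:ℝ) 1) := by
    apply ContinuousOn.log (by fun_prop)
    intro x hx; exact (quad2_pos x).ne'
  exact (((l1.const_smul ((1:ℝ)/2)).add (l2.const_smul ((1:ℝ)/4))).sub
    (l3.const_smul ((2+Real.sqrt 2)/8))).sub (l4.const_smul ((2-Real.sqrt 2)/8))

/-- For `m = 3` (so `n = 8`), the constant `κ₃ = (n/2)·∫₀¹ (1-x^m)²/(1-x^n) dx`
equals `2·ln 2 + √2·ln(1+√2)`: `4·∫₀¹ (1-x³)²/(1-x⁸) dx = 2·ln 2 + √2·ln(1+√2)`. -/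
theorem kappa_three_eq :
    4 * ∫ x in (0:ℝ)..1, (1 - x ^ 3) ^ 2 / (1 - x ^ 8) =
      2 * Real.log 2 + Real.sqrt 2 * Real.log (1 + Real.sqrt 2) := by
  have hg : Set.EqOn (fun x : ℝ => (1 - x ^ 3) ^ 2 / (1 - x ^ 8))
      (fun x : ℝ => (1-x)*(1+x+x^2)^2/((1+x)*(1+x^2)*(1+x^4))) (Set.uIcc (0:ℝ) 1) := by
    intro x hx
    rw [Set.uIcc_of_le (by norm_num : (0:ℝ) ≤ 1)] at hx
    obtain ⟨hx0, hx1⟩ := hx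
    rcases eq_or_lt_of_le hx1 with h | h
    · subst h; norm_num
    · have hx8 : x ^ 8 < 1 := pow_lt_one₀ hx0 h (by norm_num)
      have hne : (1:ℝ) - x ^ 8 ≠ 0 := by linarith
      have h1 : (0:ℝ) < 1 + x := by linarith
      have h2 : (0:ℝ) < 1 + x^2 := by positivity
      have h4 : (0:ℝ) < 1 + x^4 := by positivity
      field_simp
      ring
  rw [intervalIntegral.integral_congr hg]
  rw [intervalIntegral.integral_eq_sub_of_hasDerivAt_of_le (by norm_num) Fk_contOn
    (fun x hx => Fk_deriv hx)
    ((g_contOn.mono (by rw [Set.uIcc_of_le] <;> norm_num)).intervalIntegrable)]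
  have hs : Real.sqrt 2 ^ 2 = 2 := hs2
  have hsp : (0:ℝ) < Real.sqrt 2 := Real.sqrt_pos.mpr (by norm_num)
  have ha : (0:ℝ) < 2 - Real.sqrt 2 := by nlinarith
  have hb : (0:ℝ) < 2 + Real.sqrt 2 := by linarith
  have hab : Real.log (2 - Real.sqrt 2) + Real.log (2 + Real.sqrt 2) = Real.log 2 := by
    rw [← Real.log_mul ha.ne' hb.ne']
    norm_num
    rw [show (2 - Real.sqrt 2) * (2 + Real.sqrt 2) = 2 by nlinarith]
  have hba : Real.log (2 + Real.sqrt 2)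
      = 2 * Real.log (1 + Real.sqrt 2) + Real.log (2 - Real.sqrt 2) := by
    have h12 : (0:ℝ) < 1 + Real.sqrt 2 := by linarith
    rw [show (2:ℝ) + Real.sqrt 2 = (1 + Real.sqrt 2)^2 * (2 - Real.sqrt 2) by nlinarith]
    rw [Real.log_mul (by positivity) ha.ne', Real.log_pow]
    push_cast; ring
  unfold Fk
  norm_num
  rw [show (1:ℝ) - Real.sqrt 2 + 1 = 2 - Real.sqrt 2 by ring,
     show (1:ℝ) + Real.sqrt 2 + 1 = 2 + Real.sqrt 2 by ring]
  linear_combination (-1 : ℝ) * hab + (Real.sqrt 2 / 2) * hba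
end

section
/- For m = 4 (so n = 10), the constant κ_4 equals (5/4)·ln 5 + (√5/2)·ln(2+√5); that is, 5·∫₀¹ (1−x⁴)²/(1−x¹⁰) dx = (5/4)·ln 5 + (√5/2)·ln(2+√5). -/
open Real

set_option maxHeartbeats 1000000 in
lemma deriv_ident (s x : ℝ) (h5 : s ^ 2 = 5)
    (k1 : x ^ 2 + (1 + s) / 2 * x + 1 ≠ 0) (k2 : x ^ 2 - (1 + s) / 2 * x + 1 ≠ 0)
    (k3 : x ^ 2 - (s - 1) / 2 * x + 1 ≠ 0) (k4 : x ^ 2 + (s - 1) / 2 * x + 1 ≠ 0) :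
    (5 + s) / 20 * ((2 * x + (1 + s) / 2) / (x ^ 2 + (1 + s) / 2 * x + 1))
    - (5 + s) / 20 * ((2 * x - (1 + s) / 2) / (x ^ 2 - (1 + s) / 2 * x + 1))
    + (5 - s) / 20 * ((2 * x - (s - 1) / 2) / (x ^ 2 - (s - 1) / 2 * x + 1))
    - (5 - s) / 20 * ((2 * x + (s - 1) / 2) / (x ^ 2 + (s - 1) / 2 * x + 1))
    = (1 + x ^ 2 - x ^ 4 - x ^ 6) / (x ^ 8 + x ^ 6 + x ^ 4 + x ^ 2 + 1) := by
  have kD : (x ^ 8 + x ^ 6 + x ^ 4 + x ^ 2 + 1 : ℝ) ≠ 0 := by positivity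
  have q1 : (x ^ 2 * 2 + (1 + s) * x + 2 : ℝ) ≠ 0 := fun h => k1 (by linarith)
  have q2 : (x ^ 2 * 2 - (1 + s) * x + 2 : ℝ) ≠ 0 := fun h => k2 (by linarith)
  have q3 : (x ^ 2 * 2 - (s - 1) * x + 2 : ℝ) ≠ 0 := fun h => k3 (by linarith)
  have q4 : (x ^ 2 * 2 + (s - 1) * x + 2 : ℝ) ≠ 0 := fun h => k4 (by linarith)
  simp only [← mul_div_assoc]
  rw [div_sub_div _ _ k1 k2, div_add_div _ _ (mul_ne_zero k1 k2) k3,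
    div_sub_div _ _ (mul_ne_zero (mul_ne_zero k1 k2) k3) k4,
    div_eq_div_iff (mul_ne_zero (mul_ne_zero (mul_ne_zero k1 k2) k3) k4) kD]
  linear_combination ((1/10:ℝ) * s ^ 0 * x ^ 0 + (29/40:ℝ) * s ^ 0 * x ^ 2 + (113/80:ℝ) * s ^ 0 * x ^ 4 + (13/16:ℝ) * s ^ 0 * x ^ 6 + (-13/16:ℝ) * s ^ 0 * x ^ 8 + (-113/80:ℝ) * s ^ 0 * x ^ 10 + (-29/40:ℝ) * s ^ 0 * x ^ 12 + (-1/10:ℝ) * s ^ 0 * x ^ 14 + (-1/40:ℝ) * s ^ 2 * x ^ 2 + (-1/16:ℝ) * s ^ 2 * x ^ 4 + (-1/16:ℝ) * s ^ 2 * x ^ 6 + (1/16:ℝ) * s ^ 2 * x ^ 8 + (1/16:ℝ) * s ^ 2 * x ^ 10 + (1/40:ℝ) * s ^ 2 * x ^ 12) * h5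


/-- For `m = 4` (so `n = 10`), the constant `κ₄ = (n/2)·∫₀¹ (1-x^m)²/(1-x^n) dx`
equals `(5/4)·ln 5 + (√5/2)·ln(2+√5)`. -/
theorem kappa_four_eq :
    5 * ∫ x in (0:ℝ)..1, (1 - x ^ 4) ^ 2 / (1 - x ^ 10) =
      (5 / 4) * Real.log 5 + (Real.sqrt 5 / 2) * Real.log (2 + Real.sqrt 5) := by
  set s : ℝ := Real.sqrt 5 with hs
  have h5 : s ^ 2 = 5 := Real.sq_sqrt (by norm_num)
  have h2 : 2 < s := by
    nlinarith [Real.sqrt_nonneg 5, h5]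
  have h3 : s < 3 := by nlinarith
  -- reduce the integrand
  have hfun : ∀ x : ℝ, (1 - x ^ 4) ^ 2 / (1 - x ^ 10)
      = (1 + x ^ 2 - x ^ 4 - x ^ 6) / (x ^ 8 + x ^ 6 + x ^ 4 + x ^ 2 + 1) := by
    intro x
    rcases eq_or_ne (x ^ 2) 1 with h | h
    · have h4 : x ^ 4 = 1 := by rw [show x ^ 4 = (x ^ 2) ^ 2 by ring, h]; norm_num
      have h10 : x ^ 10 = 1 := by rw [show x ^ 10 = (x ^ 2) ^ 5 by ring, h]; norm_num
      have h6 : x ^ 6 = 1 := by rw [show x ^ 6 = (x ^ 2) ^ 3 by ring, h]; norm_num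
      rw [h4, h10, h, h6]
      norm_num
    · have hd : (1 : ℝ) - x ^ 10 ≠ 0 := by
        intro h0
        have hx10 : x ^ 10 = 1 := by linarith
        have ht : (x ^ 2) ^ 5 = 1 := by nlinarith
        have htn : (0:ℝ) ≤ x ^ 2 := sq_nonneg x
        rcases lt_trichotomy (x ^ 2) 1 with hl | he | hg
        · nlinarith [pow_lt_one₀ htn hl (by norm_num : (5:ℕ) ≠ 0)]
        · exact h he
        · nlinarith [one_lt_pow₀ hg (by norm_num : (5:ℕ) ≠ 0)]
      have hD : (0:ℝ) < x ^ 8 + x ^ 6 + x ^ 4 + x ^ 2 + 1 := by positivity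
      field_simp
      ring
  simp_rw [hfun]
  -- the antiderivative
  set a : ℝ := (5 + s) / 20 with ha
  set b : ℝ := (5 - s) / 20 with hb
  set φ : ℝ := (1 + s) / 2 with hφ
  set ψ : ℝ := (s - 1) / 2 with hψ
  set F : ℝ → ℝ := fun x =>
    a * Real.log (x ^ 2 + φ * x + 1) - a * Real.log (x ^ 2 - φ * x + 1)
    + b * Real.log (x ^ 2 - ψ * x + 1) - b * Real.log (x ^ 2 + ψ * x + 1) with hF
  have hP1 : ∀ x : ℝ, 0 < x ^ 2 + φ * x + 1 := by
    intro x; nlinarith [sq_nonneg (x + φ / 2), sq_nonneg x]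
  have hP2 : ∀ x : ℝ, 0 < x ^ 2 - φ * x + 1 := by
    intro x; nlinarith [sq_nonneg (x - φ / 2), sq_nonneg x]
  have hP3 : ∀ x : ℝ, 0 < x ^ 2 - ψ * x + 1 := by
    intro x; nlinarith [sq_nonneg (x - ψ / 2), sq_nonneg x]
  have hP4 : ∀ x : ℝ, 0 < x ^ 2 + ψ * x + 1 := by
    intro x; nlinarith [sq_nonneg (x + ψ / 2), sq_nonneg x]
  have hderiv : ∀ x : ℝ, HasDerivAt F
      ((1 + x ^ 2 - x ^ 4 - x ^ 6) / (x ^ 8 + x ^ 6 + x ^ 4 + x ^ 2 + 1)) x := by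
    intro x
    have hq : ∀ c : ℝ, HasDerivAt (fun y : ℝ => y ^ 2 + c * y + 1) (2 * x + c) x := by
      intro c
      have := ((hasDerivAt_pow 2 x).add (((hasDerivAt_id x).const_mul c).add_const 1))
      simpa [← add_assoc, Pi.add_def] using this
    have hq' : ∀ c : ℝ, HasDerivAt (fun y : ℝ => y ^ 2 - c * y + 1) (2 * x - c) x := by
      intro c
      have := hq (-c)
      simpa [sub_eq_add_neg, neg_mul] using this
    have h1 : HasDerivAt (fun y : ℝ => Real.log (y ^ 2 + φ * y + 1))
        ((2 * x + φ) / (x ^ 2 + φ * x + 1)) x :=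
      (hq φ).log (hP1 x).ne'
    have h2' : HasDerivAt (fun y : ℝ => Real.log (y ^ 2 - φ * y + 1))
        ((2 * x - φ) / (x ^ 2 - φ * x + 1)) x :=
      (hq' φ).log (hP2 x).ne'
    have h3' : HasDerivAt (fun y : ℝ => Real.log (y ^ 2 - ψ * y + 1))
        ((2 * x - ψ) / (x ^ 2 - ψ * x + 1)) x :=
      (hq' ψ).log (hP3 x).ne'
    have h4' : HasDerivAt (fun y : ℝ => Real.log (y ^ 2 + ψ * y + 1))
        ((2 * x + ψ) / (x ^ 2 + ψ * x + 1)) x :=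
      (hq ψ).log (hP4 x).ne'
    have hsum := (((h1.const_mul a).sub (h2'.const_mul a)).add (h3'.const_mul b)).sub
      (h4'.const_mul b)
    have heq : a * ((2 * x + φ) / (x ^ 2 + φ * x + 1))
        - a * ((2 * x - φ) / (x ^ 2 - φ * x + 1))
        + b * ((2 * x - ψ) / (x ^ 2 - ψ * x + 1))
        - b * ((2 * x + ψ) / (x ^ 2 + ψ * x + 1))
        = (1 + x ^ 2 - x ^ 4 - x ^ 6) / (x ^ 8 + x ^ 6 + x ^ 4 + x ^ 2 + 1) := by
      have k1 := (hP1 x).ne'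
      have k2 := (hP2 x).ne'
      have k3 := (hP3 x).ne'
      have k4 := (hP4 x).ne'
      simp only [hφ, hψ] at k1 k2 k3 k4
      rw [ha, hb, hφ, hψ]
      exact deriv_ident s x h5 k1 k2 k3 k4
    rw [hF]
    exact hsum.congr_deriv heq
  have hcont : Continuous fun x : ℝ =>
      (1 + x ^ 2 - x ^ 4 - x ^ 6) / (x ^ 8 + x ^ 6 + x ^ 4 + x ^ 2 + 1) := by
    apply Continuous.div (by fun_prop) (by fun_prop)
    intro x
    positivity
  have hint := intervalIntegral.integral_eq_sub_of_hasDerivAt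
    (fun x _ => hderiv x) (hcont.intervalIntegrable 0 1)
  rw [hint]
  -- evaluate F 1 - F 0
  have hF0 : F 0 = 0 := by simp [hF]
  have hF1 : F 1 = (1 / 2) * Real.log s + (s / 10) * Real.log (2 + s) := by
    have hs0 : (0:ℝ) < s := by linarith
    have h2s : (0:ℝ) < 2 + s := by linarith
    have h3s : (0:ℝ) < (3 - s) / 2 := by linarith
    have h3s' : (0:ℝ) < (3 + s) / 2 := by linarith
    have h5s : (0:ℝ) < (5 - s) / 2 := by linarith
    have e1 : (5 + s) / 2 = s * (2 + s) * ((3 - s) / 2) := by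
      linear_combination ((s - 1) / 2) * h5
    have e2 : (5 - s) / 2 * (2 + s) = s * ((3 + s) / 2) := by
      linear_combination (-1 : ℝ) * h5
    have l1 : Real.log ((5 + s) / 2)
        = Real.log s + Real.log (2 + s) + Real.log ((3 - s) / 2) := by
      rw [e1, Real.log_mul (mul_ne_zero hs0.ne' h2s.ne') h3s.ne',
        Real.log_mul hs0.ne' h2s.ne']
    have l2 : Real.log ((5 - s) / 2)
        = Real.log s + Real.log ((3 + s) / 2) - Real.log (2 + s) := by
      have := congrArg Real.log e2
      rw [Real.log_mul h5s.ne' h2s.ne', Real.log_mul hs0.ne' h3s'.ne'] at this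
      linarith
    have v1 : (1:ℝ) ^ 2 + φ * 1 + 1 = (5 + s) / 2 := by rw [hφ]; ring
    have v2 : (1:ℝ) ^ 2 - φ * 1 + 1 = (3 - s) / 2 := by rw [hφ]; ring
    have v3 : (1:ℝ) ^ 2 - ψ * 1 + 1 = (5 - s) / 2 := by rw [hψ]; ring
    have v4 : (1:ℝ) ^ 2 + ψ * 1 + 1 = (3 + s) / 2 := by rw [hψ]; ring
    simp only [hF, v1, v2, v3, v4]
    rw [l1, l2, ha, hb]
    ring
  rw [hF0, hF1]
  have hlogs : Real.log s = Real.log 5 / 2 := by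
    rw [hs, Real.log_sqrt (by norm_num)]
  rw [hlogs]
  ring
end

section
/- For m = 5 (so n = 12), the constant κ_5 equals ln 2 + (3/2)·ln 3 + √3·ln(2+√3); that is, 6·∫₀¹ (1−x⁵)²/(1−x¹²) dx = ln 2 + (3/2)·ln 3 + √3·ln(2+√3). -/
open Real

noncomputable def F5 : ℝ → ℝ := fun x =>
  (1/3) * Real.log (1+x) + (1/12) * Real.log (x^2-x+1) - (1/6) * Real.log (x^2+1)
  + (1/4) * Real.log (x^2+x+1) - (1/6) * Real.log (x^4-x^2+1)
  + ((Real.sqrt 3/12) * Real.log (x^2+Real.sqrt 3*x+1)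
      - (Real.sqrt 3/12) * Real.log (x^2-Real.sqrt 3*x+1))

noncomputable def g5 : ℝ → ℝ := fun x =>
  (1-x) * (1+x+x^2+x^3+x^4)^2 /
    (1+x+x^2+x^3+x^4+x^5+x^6+x^7+x^8+x^9+x^10+x^11)

lemma sq3 : (Real.sqrt 3) ^ 2 = 3 := Real.sq_sqrt (by norm_num)

lemma F5_deriv (x : ℝ) (hx : x ∈ Set.uIcc (0:ℝ) 1) : HasDerivAt F5 (g5 x) x := by
  rw [Set.uIcc_of_le (by norm_num : (0:ℝ) ≤ 1)] at hx
  obtain ⟨hx0, hx1⟩ := hx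
  set s := Real.sqrt 3 with hs
  have hs2 : s ^ 2 = 3 := sq3
  have h1 : (0:ℝ) < 1 + x := by linarith
  have h2 : (0:ℝ) < x^2 - x + 1 := by nlinarith [sq_nonneg (2*x-1)]
  have h3' : (0:ℝ) < x^2 + 1 := by positivity
  have h4 : (0:ℝ) < x^2 + x + 1 := by positivity
  have h5 : (0:ℝ) < x^4 - x^2 + 1 := by nlinarith [sq_nonneg (2*x^2-1)]
  have h6 : (0:ℝ) < x^2 + s*x + 1 := by nlinarith [sq_nonneg (2*x + s)]
  have h7 : (0:ℝ) < x^2 - s*x + 1 := by nlinarith [sq_nonneg (2*x - s)]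
  have hD : (0:ℝ) < 1+x+x^2+x^3+x^4+x^5+x^6+x^7+x^8+x^9+x^10+x^11 := by positivity
  have d1 : HasDerivAt (fun y : ℝ => 1 + y) 1 x := (hasDerivAt_id x).const_add 1
  have d2 : HasDerivAt (fun y : ℝ => y^2 - y + 1) (2*x - 1) x := by
    simpa using ((hasDerivAt_pow 2 x).sub (hasDerivAt_id x)).add_const 1
  have d3 : HasDerivAt (fun y : ℝ => y^2 + 1) (2*x) x := by
    simpa using (hasDerivAt_pow 2 x).add_const 1
  have d4 : HasDerivAt (fun y : ℝ => y^2 + y + 1) (2*x + 1) x := by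
    simpa using ((hasDerivAt_pow 2 x).add (hasDerivAt_id x)).add_const 1
  have d5 : HasDerivAt (fun y : ℝ => y^4 - y^2 + 1) (4*x^3 - 2*x) x := by
    simpa using ((hasDerivAt_pow 4 x).sub (hasDerivAt_pow 2 x)).add_const 1
  have d6 : HasDerivAt (fun y : ℝ => y^2 + s*y + 1) (2*x + s) x := by
    simpa using ((hasDerivAt_pow 2 x).add ((hasDerivAt_id x).const_mul s)).add_const 1
  have d7 : HasDerivAt (fun y : ℝ => y^2 - s*y + 1) (2*x - s) x := by
    simpa using ((hasDerivAt_pow 2 x).sub ((hasDerivAt_id x).const_mul s)).add_const 1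
  have L : HasDerivAt F5
      ((1/3) * (1/(1+x)) + (1/12) * ((2*x-1)/(x^2-x+1)) - (1/6) * ((2*x)/(x^2+1))
        + (1/4) * ((2*x+1)/(x^2+x+1)) - (1/6) * ((4*x^3-2*x)/(x^4-x^2+1))
        + ((s/12) * ((2*x+s)/(x^2+s*x+1)) - (s/12) * ((2*x-s)/(x^2-s*x+1)))) x := by
    exact (((((d1.log h1.ne').const_mul (1/3)).add
      ((d2.log h2.ne').const_mul (1/12))).sub
      ((d3.log h3'.ne').const_mul (1/6))).add
      ((d4.log h4.ne').const_mul (1/4))).sub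
      ((d5.log h5.ne').const_mul (1/6)) |>.add
      ((((d6.log h6.ne').const_mul (s/12))).sub
        ((d7.log h7.ne').const_mul (s/12)))
  have hpair : (s/12) * ((2*x+s)/(x^2+s*x+1)) - (s/12) * ((2*x-s)/(x^2-s*x+1))
      = (1 - x^2) / (2*(x^4 - x^2 + 1)) := by
    have e6 : x*(x+s)+1 ≠ 0 := by nlinarith
    have e7 : x*(x-s)+1 ≠ 0 := by nlinarith
    have e5 : x^2*(x^2-1)+1 ≠ 0 := by nlinarith
    field_simp
    linear_combination (4*(1-x^2)*(x^2+1)^2) * hs2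
  convert L using 1
  rw [hpair]
  show g5 x = _
  unfold g5
  have e2 : x*(x-1)+1 ≠ 0 := by nlinarith
  have e4 : x*(x+1)+1 ≠ 0 := by nlinarith
  have e5 : x^2*(x^2-1)+1 ≠ 0 := by nlinarith
  field_simp
  ring

lemma g5_cont : ContinuousOn g5 (Set.uIcc (0:ℝ) 1) := by
  rw [Set.uIcc_of_le (by norm_num : (0:ℝ) ≤ 1)]
  apply ContinuousOn.div (by fun_prop) (by fun_prop)
  intro x hx
  have hx0 : (0:ℝ) ≤ x := hx.1
  positivity

lemma f_eq_g5 : Set.EqOn (fun x : ℝ => (1 - x ^ 5) ^ 2 / (1 - x ^ 12)) g5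
    (Set.uIcc (0:ℝ) 1) := by
  rw [Set.uIcc_of_le (by norm_num : (0:ℝ) ≤ 1)]
  intro x hx
  obtain ⟨hx0, hx1⟩ := hx
  rcases eq_or_lt_of_le hx1 with h | h
  · subst h
    simp [g5]
  · have hne : (1:ℝ) - x^12 ≠ 0 := by
      have : x^12 < 1 := pow_lt_one₀ hx0 h (by norm_num)
      linarith
    have hD : (0:ℝ) < 1+x+x^2+x^3+x^4+x^5+x^6+x^7+x^8+x^9+x^10+x^11 := by positivity
    show (1 - x ^ 5) ^ 2 / (1 - x ^ 12) = _
    unfold g5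
    rw [div_eq_div_iff hne hD.ne']
    ring

/-- For `m = 5` (so `n = 12`), the constant `κ₅ = (n/2)·∫₀¹ (1-x^m)²/(1-x^n) dx`
equals `ln 2 + (3/2)·ln 3 + √3·ln(2+√3)`. -/
theorem kappa_five_eq :
    6 * ∫ x in (0:ℝ)..1, (1 - x ^ 5) ^ 2 / (1 - x ^ 12) =
      Real.log 2 + (3 / 2) * Real.log 3 + Real.sqrt 3 * Real.log (2 + Real.sqrt 3) := by
  have h1 : (∫ x in (0:ℝ)..1, (1 - x ^ 5) ^ 2 / (1 - x ^ 12)) = ∫ x in (0:ℝ)..1, g5 x :=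
    intervalIntegral.integral_congr f_eq_g5
  have h2 : (∫ x in (0:ℝ)..1, g5 x) = F5 1 - F5 0 :=
    intervalIntegral.integral_eq_sub_of_hasDerivAt F5_deriv (g5_cont.intervalIntegrable)
  rw [h1, h2]
  set s := Real.sqrt 3 with hs
  have hs2 : s ^ 2 = 3 := sq3
  have hslt : s < 2 := by nlinarith [Real.sqrt_nonneg 3]
  have hsp : 0 < s := Real.sqrt_pos.mpr (by norm_num)
  have hinv : Real.log (2 - s) = - Real.log (2 + s) := by
    rw [eq_inv_of_mul_eq_one_left (a := 2 - s) (b := 2 + s) (by linear_combination -hs2),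
      Real.log_inv]
  have e0 : F5 0 = 0 := by norm_num [F5]
  have e1 : F5 1 = (1/3) * Real.log 2 + (1/12) * Real.log 1 - (1/6) * Real.log 2
      + (1/4) * Real.log 3 - (1/6) * Real.log 1
      + ((s/12) * Real.log (2 + s) - (s/12) * Real.log (2 - s)) := by
    unfold F5
    norm_num
    ring_nf
    rfl
  rw [e0, e1, hinv]
  simp [Real.log_one]
  ring
end

section
/- Let m ≥ 1 be an integer, n = 2m+2, p_j = e^{2πij/n}, and λ ∈ ℂ with λ ≠ 0. For 0 ≤ j ≤ n−1 define the 2×2 complex matrices A_j(λ) with entries (A_j)₁₁ = (−1)^j·λ, (A_j)₁₂ = λ^{−1}·e^{2πij/n}·(λ²−1)/2, (A_j)₂₁ = λ·(−2)·e^{−2πij/n}, (A_j)₂₂ = −(−1)^j·λ. Then for every z ∈ ℂ with z^n ≠ 1, ∑_{j=0}^{n−1} A_j(λ)/(z − p_j) equals (n/(2(z^n − 1))) times the matrix [[2λz^m, λ − λ^{−1}], [−4λz^{2m}, −2λz^m]]. -/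
open Complex Finset Matrix

lemma inner_sum_zero (n : ℕ) (ζ : ℂ) (hζ : IsPrimitiveRoot ζ n) (a : ℕ) (ha : ¬ (n ∣ a)) :
    ∑ j ∈ Finset.range n, ζ ^ (j * a) = 0 := by
  have h1 : ζ ^ a ≠ 1 := fun h => ha ((hζ.pow_eq_one_iff_dvd a).mp h)
  have h2 : ∑ j ∈ Finset.range n, ζ ^ (j * a) = ∑ j ∈ Finset.range n, (ζ ^ a) ^ j := by
    refine Finset.sum_congr rfl fun j _ => ?_
    rw [← pow_mul, mul_comm]
  rw [h2, geom_sum_eq h1, ← pow_mul, mul_comm a n, pow_mul, hζ.pow_eq_one, one_pow,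
    sub_self, zero_div]

lemma key_sum (n k : ℕ) (ζ z : ℂ) (hζ : IsPrimitiveRoot ζ n) (hz : z ^ n ≠ 1)
    (hk1 : 1 ≤ k) (hk2 : k ≤ n) :
    ∑ j ∈ Finset.range n, ζ ^ (j * k) / (z - ζ ^ j) = n * z ^ (k - 1) / (z ^ n - 1) := by
  have hn : 0 < n := hk1.trans hk2
  have hden : z ^ n - 1 ≠ 0 := sub_ne_zero.mpr hz
  have hstep : ∀ j ∈ Finset.range n,
      ζ ^ (j * k) / (z - ζ ^ j)
        = (∑ i ∈ Finset.range n, ζ ^ (j * (k + (n - 1 - i))) * z ^ i) / (z ^ n - 1) := by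
    intro j _
    have hpow : (ζ ^ j) ^ n = 1 := by
      rw [← pow_mul, mul_comm, pow_mul, hζ.pow_eq_one, one_pow]
    have hzj : z - ζ ^ j ≠ 0 := by
      intro h
      rw [sub_eq_zero] at h
      exact hz (by rw [h, hpow])
    have hgeo : (∑ i ∈ Finset.range n, z ^ i * (ζ ^ j) ^ (n - 1 - i)) * (z - ζ ^ j)
        = z ^ n - 1 := by
      rw [geom_sum₂_mul, hpow]
    rw [div_eq_div_iff hzj hden, ← hgeo, ← mul_assoc, Finset.mul_sum, Finset.sum_mul,
      Finset.sum_mul]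
    refine Finset.sum_congr rfl fun i _ => ?_
    rw [Nat.mul_add, pow_add, pow_mul]
    ring
  rw [Finset.sum_congr rfl hstep, ← Finset.sum_div]
  congr 1
  rw [Finset.sum_comm]
  have hrw : ∀ i ∈ Finset.range n,
      (∑ j ∈ Finset.range n, ζ ^ (j * (k + (n - 1 - i))) * z ^ i)
        = (∑ j ∈ Finset.range n, ζ ^ (j * (k + (n - 1 - i)))) * z ^ i := by
    intro i _
    rw [Finset.sum_mul]
  rw [Finset.sum_congr rfl hrw, Finset.sum_eq_single (k - 1)]
  · have he : k + (n - 1 - (k - 1)) = n := by omega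
    rw [he]
    have h1 : ∀ j ∈ Finset.range n, ζ ^ (j * n) = (1 : ℂ) := by
      intro j _
      rw [mul_comm, pow_mul, hζ.pow_eq_one, one_pow]
    rw [Finset.sum_congr rfl h1, Finset.sum_const, Finset.card_range, nsmul_eq_mul, mul_one]
  · intro i hi hne
    have hin : i < n := Finset.mem_range.mp hi
    have ha : ¬ (n ∣ (k + (n - 1 - i))) := by
      intro hd
      obtain ⟨c, hc⟩ := hd
      have hc0 : c ≠ 0 := by rintro rfl; omega
      have hc2 : c < 2 := by
        by_contra hcge
        push_neg at hcge
        have h2 : n * 2 ≤ n * c := Nat.mul_le_mul_left n hcge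
        omega
      have hc1 : c = 1 := by omega
      rw [hc1, mul_one] at hc
      omega
    rw [inner_sum_zero n ζ hζ _ ha, zero_mul]
  · intro h
    exact absurd (Finset.mem_range.mpr (by omega)) h

/-- With `n = 2m+2`, `p j = e^{2πij/n}`, and the residue matrices
`A j = [[(-1)^j λ, λ⁻¹ e^{2πij/n}(λ²-1)/2], [-2λ e^{-2πij/n}, -(-1)^j λ]]`,
one has `∑_{j=0}^{n-1} A j/(z - p j)
  = (n/(2(z^n - 1))) · [[2λz^m, λ-λ⁻¹], [-4λz^{2m}, -2λz^m]]` for `z^n ≠ 1`. -/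
theorem sum_residue_matrices (m : ℕ) (hm : 1 ≤ m) (lam z : ℂ) (hlam : lam ≠ 0)
    (hz : z ^ (2 * m + 2) ≠ 1) :
    ∑ j ∈ Finset.range (2 * m + 2),
        (z - Complex.exp (2 * Real.pi * Complex.I * (j : ℂ) / (2 * (m : ℂ) + 2)))⁻¹ •
          (!![(-1 : ℂ) ^ j * lam,
              lam⁻¹ * Complex.exp (2 * Real.pi * Complex.I * (j : ℂ) / (2 * (m : ℂ) + 2)) *
                ((lam ^ 2 - 1) / 2);
              lam * (-2) * Complex.exp (-(2 * Real.pi * Complex.I * (j : ℂ)) / (2 * (m : ℂ) + 2)),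
              -((-1 : ℂ) ^ j * lam)] : Matrix (Fin 2) (Fin 2) ℂ) =
      ((2 * (m : ℂ) + 2) / (2 * (z ^ (2 * m + 2) - 1))) •
        (!![2 * lam * z ^ m, lam - lam⁻¹;
            -4 * lam * z ^ (2 * m), -2 * lam * z ^ m] : Matrix (Fin 2) (Fin 2) ℂ) := by
  set n : ℕ := 2 * m + 2 with hn
  have hn0 : n ≠ 0 := by omega
  set ζ : ℂ := Complex.exp (2 * Real.pi * Complex.I / n) with hζdef
  have hζ : IsPrimitiveRoot ζ n := Complex.isPrimitiveRoot_exp n hn0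
  have hcast : (n : ℂ) = 2 * (m : ℂ) + 2 := by push_cast [hn]; ring
  have hden : z ^ n - 1 ≠ 0 := sub_ne_zero.mpr hz
  -- exp rewrites
  have hexp : ∀ j : ℕ, Complex.exp (2 * Real.pi * Complex.I * (j : ℂ) / (2 * (m : ℂ) + 2))
      = ζ ^ j := by
    intro j
    rw [← hcast, hζdef, ← Complex.exp_nat_mul]
    congr 1
    ring
  have hζj_ne : ∀ j : ℕ, (ζ : ℂ) ^ j ≠ 0 := fun j =>
    pow_ne_zero j (Complex.exp_ne_zero _)
  have hexpneg : ∀ j : ℕ,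
      Complex.exp (-(2 * Real.pi * Complex.I * (j : ℂ)) / (2 * (m : ℂ) + 2))
        = ζ ^ (j * (n - 1)) := by
    intro j
    have h1 : Complex.exp (-(2 * Real.pi * Complex.I * (j : ℂ)) / (2 * (m : ℂ) + 2))
        = (ζ ^ j)⁻¹ := by
      rw [← hexp j, ← Complex.exp_neg]
      congr 1
      ring
    rw [h1]
    have h2 : ζ ^ (j * (n - 1)) * ζ ^ j = 1 := by
      rw [← pow_add]
      have : j * (n - 1) + j = j * n := by
        rw [← Nat.mul_succ, Nat.succ_eq_add_one, Nat.sub_add_cancel (by omega : 1 ≤ n)]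
      rw [this, mul_comm, pow_mul, hζ.pow_eq_one, one_pow]
    exact inv_eq_of_mul_eq_one_left h2
  have hne2 : (2 * (m : ℂ) + 2) ≠ 0 := by
    rw [← hcast]
    exact Nat.cast_ne_zero.mpr hn0
  have hneg : ∀ j : ℕ, ((-1 : ℂ)) ^ j = ζ ^ (j * (m + 1)) := by
    intro j
    have h1 : ζ ^ (m + 1) = -1 := by
      rw [hζdef, ← Complex.exp_nat_mul, hcast]
      have harg : ((m + 1 : ℕ) : ℂ) * (2 * Real.pi * Complex.I / (2 * (m : ℂ) + 2))
          = Real.pi * Complex.I := by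
        push_cast
        field_simp
      rw [harg, Complex.exp_pi_mul_I]
    rw [mul_comm, pow_mul, h1]
  -- the four scalar sums
  have key1 : ∑ j ∈ Finset.range n, ζ ^ (j * (m + 1)) / (z - ζ ^ j)
      = n * z ^ m / (z ^ n - 1) := by
    have := key_sum n (m + 1) ζ z hζ hz (by omega) (by omega)
    simpa using this
  have key2 : ∑ j ∈ Finset.range n, ζ ^ (j * 1) / (z - ζ ^ j)
      = n * z ^ 0 / (z ^ n - 1) := by
    have := key_sum n 1 ζ z hζ hz le_rfl (by omega)
    simpa using this
  have key3 : ∑ j ∈ Finset.range n, ζ ^ (j * (n - 1)) / (z - ζ ^ j)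
      = n * z ^ (2 * m) / (z ^ n - 1) := by
    have := key_sum n (n - 1) ζ z hζ hz (by omega) (by omega)
    have he : n - 1 - 1 = 2 * m := by omega
    rwa [he] at this
  ext i j
  fin_cases i <;> fin_cases j <;>
    simp only [Fin.mk_zero, Fin.mk_one, Fin.isValue, Matrix.sum_apply, Matrix.smul_apply,
      Matrix.of_apply, Matrix.cons_val', Matrix.cons_val_zero, Matrix.cons_val_one,
      Matrix.head_cons, Matrix.head_fin_const, Matrix.empty_val', Matrix.cons_val_fin_one,
      smul_eq_mul]
  · -- (0,0)
    have h : ∀ j ∈ Finset.range n,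
        (z - Complex.exp (2 * Real.pi * Complex.I * (j : ℂ) / (2 * (m : ℂ) + 2)))⁻¹ *
          ((-1 : ℂ) ^ j * lam) = lam * (ζ ^ (j * (m + 1)) / (z - ζ ^ j)) := by
      intro j _
      rw [hexp j, hneg j]
      ring
    rw [Finset.sum_congr rfl h, ← Finset.mul_sum, key1, hcast]
    field_simp [hden]
  · -- (0,1)
    have h : ∀ j ∈ Finset.range n,
        (z - Complex.exp (2 * Real.pi * Complex.I * (j : ℂ) / (2 * (m : ℂ) + 2)))⁻¹ *
          (lam⁻¹ * Complex.exp (2 * Real.pi * Complex.I * (j : ℂ) / (2 * (m : ℂ) + 2)) *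
            ((lam ^ 2 - 1) / 2))
          = (lam⁻¹ * ((lam ^ 2 - 1) / 2)) * (ζ ^ (j * 1) / (z - ζ ^ j)) := by
      intro j _
      rw [hexp j, pow_mul, pow_one]
      ring
    rw [Finset.sum_congr rfl h, ← Finset.mul_sum, key2, hcast]
    field_simp [hden]
  · -- (1,0)
    have h : ∀ j ∈ Finset.range n,
        (z - Complex.exp (2 * Real.pi * Complex.I * (j : ℂ) / (2 * (m : ℂ) + 2)))⁻¹ *
          (lam * (-2) *
            Complex.exp (-(2 * Real.pi * Complex.I * (j : ℂ)) / (2 * (m : ℂ) + 2)))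
          = (lam * (-2)) * (ζ ^ (j * (n - 1)) / (z - ζ ^ j)) := by
      intro j _
      rw [hexp j, hexpneg j]
      ring
    rw [Finset.sum_congr rfl h, ← Finset.mul_sum, key3, hcast]
    field_simp [hden]
    ring
  · -- (1,1)
    have h : ∀ j ∈ Finset.range n,
        (z - Complex.exp (2 * Real.pi * Complex.I * (j : ℂ) / (2 * (m : ℂ) + 2)))⁻¹ *
          (-((-1 : ℂ) ^ j * lam)) = (-lam) * (ζ ^ (j * (m + 1)) / (z - ζ ^ j)) := by
      intro j _
      rw [hexp j, hneg j]
      ring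
    rw [Finset.sum_congr rfl h, ← Finset.mul_sum, key1, hcast]
    field_simp [hden]
end

section
/- Let n ≥ 1 and k, ℓ be nonnegative integers. Let D ⊂ ℂ be an open disk containing 0 and 1 and containing no n-th root of unity other than 1, and let γ : [0,1] → D \ {1} be a piecewise C¹ loop with γ(0) = γ(1) = 0 whose winding number around 1 equals 1, i.e. (1/(2πi))·∫₀¹ γ′(s)/(γ(s) − 1) ds = 1. For s ∈ [0,1] define I_k(s) = ∫₀^s γ(u)^k·γ′(u)/(γ(u)^n − 1) du. Then ∫₀¹ ( I_k(s)·γ(s)^ℓ − I_ℓ(s)·γ(s)^k )·γ′(s)/(γ(s)^n − 1) ds = (4πi/n)·J_{k,ℓ}. -/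
open Complex MeasureTheory

section ContourAux

open Metric Set intervalIntegral Finset

/-- Partial geometric sum `∑_{i<m} z^i`. -/
noncomputable def auxP {K : Type*} [CommRing K] (m : ℕ) (z : K) : K :=
  ∑ i ∈ Finset.range m, z ^ i

/-- The holomorphic part of `z^m/(z^n-1)` after removing the pole `1/(n(z-1))`. -/
noncomputable def auxH (n m : ℕ) (z : ℂ) : ℂ :=
  ((n : ℂ) * auxP m z - ∑ j ∈ Finset.range n, auxP j z) / ((n : ℂ) * auxP n z)

lemma auxP_mul {K : Type*} [CommRing K] (m : ℕ) (z : K) :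
    (z - 1) * auxP m z = z ^ m - 1 := by
  rw [auxP, mul_comm]; exact geom_sum_mul z m

lemma auxP_one {K : Type*} [CommRing K] (m : ℕ) : auxP m (1 : K) = m := by
  simp [auxP]

lemma auxSum_mul (n : ℕ) (z : ℂ) :
    (z - 1) * (∑ j ∈ Finset.range n, auxP j z) = auxP n z - n := by
  rw [Finset.mul_sum]
  have : ∀ j ∈ Finset.range n, (z - 1) * auxP j z = z ^ j - 1 :=
    fun j _ => auxP_mul j z
  rw [Finset.sum_congr rfl this, Finset.sum_sub_distrib]
  simp [auxP]

lemma aux_key1 (n m : ℕ) (z : ℂ) :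
    (z - 1) * ((n : ℂ) * auxP m z - ∑ j ∈ Finset.range n, auxP j z)
      = (n : ℂ) * z ^ m - auxP n z := by
  linear_combination (n : ℂ) * auxP_mul m z - auxSum_mul n z

lemma aux_idA' (n m : ℕ) (hn : (n:ℂ) ≠ 0) (z w' Q P S : ℂ) (hz : z - 1 ≠ 0) (hQ : Q ≠ 0)
    (key : (z-1) * ((n:ℂ) * P - S) = (n:ℂ)*z^m - Q) :
    z ^ m * w' / ((z-1) * Q)
      = (1/(n:ℂ)) * (w' * (z - 1)⁻¹) + (((n : ℂ) * P - S)/((n:ℂ)*Q)) * w' := by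
  have h1 : (1/(n:ℂ)) * (w' * (z-1)⁻¹) = (Q * w') / ((n:ℂ) * ((z-1)*Q)) := by
    field_simp
  have h2 : (((n : ℂ) * P - S)/((n:ℂ)*Q)) * w'
      = ((z-1) * ((n:ℂ) * P - S) * w') / ((n:ℂ) * ((z-1)*Q)) := by
    rw [div_mul_eq_mul_div]
    rw [div_eq_div_iff (by exact mul_ne_zero hn hQ) (by exact mul_ne_zero hn (mul_ne_zero hz hQ))]
    ring
  rw [h1, h2, ← add_div]
  have h3 : Q * w' + (z-1) * ((n:ℂ) * P - S) * w' = (n:ℂ) * (z^m * w') := by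
    linear_combination w' * key
  rw [h3, mul_div_mul_left _ _ hn]

lemma aux_idA (n m : ℕ) (hn : (n:ℂ) ≠ 0) (z w' : ℂ) (hz : z ≠ 1) (hQ : auxP n z ≠ 0) :
    z ^ m * w' / (z ^ n - 1)
      = (1/(n:ℂ)) * (w' * (z - 1)⁻¹) + auxH n m z * w' := by
  have hz' : z - 1 ≠ 0 := sub_ne_zero.mpr hz
  have hzn : z ^ n - 1 = (z - 1) * auxP n z := (auxP_mul n z).symm
  rw [auxH, hzn]
  exact aux_idA' n m hn z w' _ _ _ hz' hQ (aux_key1 n m z)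

lemma aux_gfun (n k l : ℕ) (hn : (n:ℂ) ≠ 0) (z : ℂ) (hQ : auxP n z ≠ 0) :
    auxH n k z - auxH n l z = (auxP k z - auxP l z) / auxP n z := by
  rw [auxH, auxH]
  field_simp
  ring

lemma aux_big (n k l : ℕ) (hn : (n:ℂ) ≠ 0) (z : ℂ) (hz : z ≠ 1) (hQ : auxP n z ≠ 0)
    (W A A0 B B0 w' : ℂ) :
    (((1/(n:ℂ)) * W + (A - A0)) * z ^ l - ((1/(n:ℂ)) * W + (B - B0)) * z ^ k) * w' / (z ^ n - 1)
      = (1/(n:ℂ)) * (-(W * ((auxH n k z - auxH n l z) * w'))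
          + ((A - B) - (A0 - B0)) * (w' * (z - 1)⁻¹))
        + ((A - A0) * auxH n l z - (B - B0) * auxH n k z) * w' := by
  have hz' : z - 1 ≠ 0 := sub_ne_zero.mpr hz
  have hzn0 : z ^ n - 1 ≠ 0 := by
    rw [← auxP_mul n z]; exact mul_ne_zero hz' hQ
  have split : ∀ X Y : ℂ, (X * z ^ l - Y * z ^ k) * w' / (z ^ n - 1)
      = X * (z ^ l * w' / (z ^ n - 1)) - Y * (z ^ k * w' / (z ^ n - 1)) := by
    intro X Y; field_simp
  rw [split, aux_idA n l hn z w' hz hQ, aux_idA n k hn z w' hz hQ]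
  ring

/-- Existence of primitives of holomorphic functions on a disc. -/
lemma exists_primitive {c : ℂ} {R : ℝ} {f : ℂ → ℂ}
    (hf : DifferentiableOn ℂ f (ball c R)) :
    ∃ F : ℂ → ℂ, ∀ z ∈ ball c R, HasDerivAt F (f z) z := by
  refine ⟨fun z => ∫ t in (0:ℝ)..1, f (c + t * (z - c)) * (z - c), fun z₀ hz₀ => ?_⟩
  set ε : ℝ := (R - dist z₀ c) / 2 with hε
  have hεpos : 0 < ε := by
    have := mem_ball.1 hz₀; simp only [hε]; linarith
  set r : ℝ := dist z₀ c + ε with hr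
  have hr0 : 0 ≤ r := by positivity
  have hrR : r < R := by
    have := mem_ball.1 hz₀; simp only [hr, hε]; linarith
  have hsub : closedBall c r ⊆ ball c R := closedBall_subset_ball hrR
  have hxc : ∀ x ∈ ball z₀ ε, dist x c ≤ r := by
    intro x hx
    calc dist x c ≤ dist x z₀ + dist z₀ c := dist_triangle _ _ _
      _ ≤ ε + dist z₀ c := by have := (mem_ball.1 hx).le; linarith
      _ = r := by rw [hr]; ring
  have hmem : ∀ x ∈ ball z₀ ε, ∀ t : ℝ, |t| ≤ 1 →
      c + (t:ℂ) * (x - c) ∈ closedBall c r := by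
    intro x hx t ht
    have hd : dist (c + (t:ℂ) * (x - c)) c = |t| * dist x c := by
      rw [dist_eq_norm, dist_eq_norm]
      rw [show c + (t:ℂ) * (x - c) - c = (t:ℂ) * (x - c) by ring]
      rw [norm_mul, Complex.norm_real, Real.norm_eq_abs]
    rw [mem_closedBall, hd]
    calc |t| * dist x c ≤ 1 * dist x c :=
          mul_le_mul_of_nonneg_right ht dist_nonneg
      _ = dist x c := one_mul _
      _ ≤ r := hxc x hx
  have hz₀mem : z₀ ∈ ball z₀ ε := mem_ball_self hεpos
  have hfc : ContinuousOn f (closedBall c r) := hf.continuousOn.mono hsub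
  have hanal : AnalyticOnNhd ℂ f (ball c R) := hf.analyticOnNhd isOpen_ball
  have hder : ContinuousOn (deriv f) (closedBall c r) :=
    ((hanal.deriv).continuousOn).mono hsub
  obtain ⟨C₁, hC₁⟩ := (isCompact_closedBall c r).exists_bound_of_continuousOn hfc
  obtain ⟨C₂, hC₂⟩ := (isCompact_closedBall c r).exists_bound_of_continuousOn hder
  set F' : ℂ → ℝ → ℂ := fun x t =>
    deriv f (c + t * (x - c)) * (t * (x - c)) + f (c + t * (x - c)) with hF'
  have habs : ∀ t : ℝ, t ∈ Set.Icc (0:ℝ) 1 → |t| ≤ 1 := fun t ht =>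
    abs_le.2 ⟨by linarith [ht.1], ht.2⟩
  have hcurve : ∀ x : ℂ, Continuous fun t : ℝ => c + (t:ℂ) * (x - c) := fun x => by
    continuity
  have hFcont : ∀ x ∈ ball z₀ ε,
      ContinuousOn (fun t : ℝ => f (c + t * (x - c)) * (x - c)) (Set.Icc 0 1) := by
    intro x hx
    exact (hfc.comp (hcurve x).continuousOn
      (fun t ht => hmem x hx t (habs t ht))).mul continuousOn_const
  have hF'cont : ∀ x ∈ ball z₀ ε, ContinuousOn (F' x) (Set.Icc 0 1) := by
    intro x hx
    have h1 : ContinuousOn (fun t : ℝ => deriv f (c + t * (x - c))) (Set.Icc 0 1) :=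
      hder.comp (hcurve x).continuousOn (fun t ht => hmem x hx t (habs t ht))
    have h2 : ContinuousOn (fun t : ℝ => f (c + t * (x - c))) (Set.Icc 0 1) :=
      hfc.comp (hcurve x).continuousOn (fun t ht => hmem x hx t (habs t ht))
    exact (h1.mul ((Complex.continuous_ofReal.continuousOn).mul continuousOn_const)).add h2
  have hIoc : Set.uIoc (0:ℝ) 1 ⊆ Set.Icc (0:ℝ) 1 := by
    rw [uIoc_of_le (zero_le_one)]; exact Ioc_subset_Icc_self
  have key := intervalIntegral.hasDerivAt_integral_of_dominated_loc_of_deriv_le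
    (F := fun x => fun t : ℝ => f (c + t * (x - c)) * (x - c)) (F' := F')
    (x₀ := z₀) (a := 0) (b := 1) (μ := volume)
    (bound := fun _ => C₂ * r + C₁) (Metric.ball_mem_nhds z₀ hεpos)
    ?_ ?_ ?_ ?_ ?_ ?_
  · have heval : (∫ t in (0:ℝ)..1, F' z₀ t) = f z₀ := by
      have hφ : ∀ t ∈ Set.uIcc (0:ℝ) 1,
          HasDerivAt (fun t : ℝ => (t:ℂ) * f (c + t * (z₀ - c))) (F' z₀ t) t := by
        intro t ht
        rw [Set.uIcc_of_le zero_le_one] at ht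
        have hp : c + (t:ℂ) * (z₀ - c) ∈ ball c R :=
          hsub (hmem z₀ hz₀mem t (habs t ht))
        have hA : HasDerivAt (fun t : ℝ => (t:ℂ)) 1 t := by
          simpa using (hasDerivAt_id t).ofReal_comp
        have hw : HasDerivAt (fun w : ℂ => c + w * (z₀ - c)) (z₀ - c) ((t:ℝ):ℂ) := by
          simpa using ((hasDerivAt_id ((t:ℝ):ℂ)).mul_const (z₀ - c)).const_add c
        have hfp : HasDerivAt f (deriv f (c + (t:ℂ) * (z₀ - c))) (c + (t:ℂ) * (z₀ - c)) :=
          (hf.differentiableAt (isOpen_ball.mem_nhds hp)).hasDerivAt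
        have hB := (HasDerivAt.comp ((t:ℝ):ℂ) hfp hw).comp_ofReal
        have := hA.fun_mul hB
        refine this.congr_deriv ?_
        simp only [hF', Function.comp]
        ring
      have hφint : IntervalIntegrable (F' z₀) volume 0 1 := by
        apply ContinuousOn.intervalIntegrable
        rw [Set.uIcc_of_le zero_le_one]
        exact hF'cont z₀ hz₀mem
      have := intervalIntegral.integral_eq_sub_of_hasDerivAt hφ hφint
      rw [this]
      norm_num
    rw [heval] at key
    exact key.2
  · filter_upwards [Metric.ball_mem_nhds z₀ hεpos] with x hx
    exact ((hFcont x hx).mono hIoc).aestronglyMeasurable measurableSet_uIoc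
  · apply ContinuousOn.intervalIntegrable
    rw [Set.uIcc_of_le zero_le_one]
    exact hFcont z₀ hz₀mem
  · exact ((hF'cont z₀ hz₀mem).mono hIoc).aestronglyMeasurable measurableSet_uIoc
  · refine Filter.Eventually.of_forall fun t => fun ht x hx => ?_
    have ht' := habs t (hIoc ht)
    have hp := hmem x hx t ht'
    have hb1 : ‖deriv f (c + (t:ℂ) * (x - c))‖ ≤ C₂ := hC₂ _ hp
    have hb2 : ‖f (c + (t:ℂ) * (x - c))‖ ≤ C₁ := hC₁ _ hp
    have hb3 : ‖(t:ℂ) * (x - c)‖ ≤ r := by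
      rw [norm_mul, Complex.norm_real, Real.norm_eq_abs]
      calc |t| * ‖x - c‖ ≤ 1 * ‖x - c‖ :=
            mul_le_mul_of_nonneg_right ht' (norm_nonneg _)
        _ = dist x c := by rw [one_mul, dist_eq_norm]
        _ ≤ r := hxc x hx
    calc ‖F' x t‖ ≤ ‖deriv f (c + (t:ℂ) * (x - c)) * ((t:ℂ) * (x - c))‖ +
          ‖f (c + (t:ℂ) * (x - c))‖ := norm_add_le _ _
      _ ≤ C₂ * r + C₁ := by
          have hA : ‖deriv f (c + (t:ℂ) * (x - c)) * ((t:ℂ) * (x - c))‖ ≤ C₂ * r := by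
            rw [norm_mul]
            exact mul_le_mul hb1 hb3 (norm_nonneg _) (le_trans (norm_nonneg _) hb1)
          exact add_le_add hA hb2
  · exact intervalIntegrable_const
  · refine Filter.Eventually.of_forall fun t => fun ht x hx => ?_
    have ht' := habs t (hIoc ht)
    have hp : c + (t:ℂ) * (x - c) ∈ ball c R := hsub (hmem x hx t ht')
    have h₁ : HasDerivAt (fun x : ℂ => c + (t:ℂ) * (x - c)) (t:ℂ) x := by
      simpa using (((hasDerivAt_id x).sub_const c).const_mul (t:ℂ)).const_add c
    have h₂ : HasDerivAt f (deriv f (c + (t:ℂ) * (x - c))) (c + (t:ℂ) * (x - c)) :=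
      (hf.differentiableAt (isOpen_ball.mem_nhds hp)).hasDerivAt
    have h₄ : HasDerivAt (fun x : ℂ => x - c) 1 x := (hasDerivAt_id x).sub_const c
    have := (h₂.comp x h₁).fun_mul h₄
    refine this.congr_deriv ?_
    simp only [hF', Function.comp]
    ring

/-- Fundamental theorem of calculus along a piecewise-`C¹` path in a disc. -/
lemma ftc_path {c : ℂ} {R : ℝ} {γ γ' : ℝ → ℂ} {S : Set ℝ} (hS : S.Countable)
    (hmaps : ∀ s ∈ Set.Icc (0:ℝ) 1, γ s ∈ ball c R)
    (hcont : ContinuousOn γ (Set.Icc 0 1))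
    (hderiv : ∀ s ∈ Set.Icc (0:ℝ) 1 \ S, HasDerivAt γ (γ' s) s)
    (hint : IntervalIntegrable γ' volume 0 1)
    {f F : ℂ → ℂ} (hf : ContinuousOn f (ball c R))
    (hF : ∀ z ∈ ball c R, HasDerivAt F (f z) z)
    {b : ℝ} (hb : b ∈ Set.Icc (0:ℝ) 1) :
    ∫ s in (0:ℝ)..b, f (γ s) * γ' s = F (γ b) - F (γ 0) := by
  have hsub : Set.Icc (0:ℝ) b ⊆ Set.Icc 0 1 := Set.Icc_subset_Icc le_rfl hb.2
  have hFc : ContinuousOn F (ball c R) := fun z hz =>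
    (hF z hz).continuousAt.continuousWithinAt
  apply MeasureTheory.integral_eq_of_hasDerivAt_off_countable_of_le
    (fun s => F (γ s)) _ hb.1 hS
  · exact hFc.comp (hcont.mono hsub) (fun s hs => hmaps s (hsub hs))
  · intro x hx
    have hx1 : x ∈ Set.Icc (0:ℝ) 1 := hsub (Set.Ioo_subset_Icc_self hx.1)
    exact (hF (γ x) (hmaps x hx1)).comp x (hderiv x ⟨hx1, hx.2⟩)
  · apply IntervalIntegrable.continuousOn_mul
    · exact hint.mono_set (by rw [Set.uIcc_of_le hb.1, Set.uIcc_of_le zero_le_one]; exact hsub)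
    · rw [Set.uIcc_of_le hb.1]
      exact hf.comp (hcont.mono hsub) (fun s hs => hmaps s (hsub hs))

/-- Integration by parts for primitives of integrable functions, via Fubini. -/
lemma aux_parts (ψ δ : ℝ → ℂ) (hψ : IntervalIntegrable ψ volume 0 1)
    (hδ : IntervalIntegrable δ volume 0 1) :
    ∫ s in (0:ℝ)..1, (∫ u in (0:ℝ)..s, ψ u) * δ s
      = ∫ u in (0:ℝ)..1, ψ u *
          ((∫ s in (0:ℝ)..1, δ s) - ∫ s in (0:ℝ)..u, δ s) := by
  have hψ' : IntegrableOn ψ (Set.Ioc (0:ℝ) 1) volume :=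
    (intervalIntegrable_iff_integrableOn_Ioc_of_le zero_le_one).1 hψ
  have hδ' : IntegrableOn δ (Set.Ioc (0:ℝ) 1) volume :=
    (intervalIntegrable_iff_integrableOn_Ioc_of_le zero_le_one).1 hδ
  have hmonoδ : ∀ s : ℝ, s ∈ Set.Ioc (0:ℝ) 1 → IntervalIntegrable δ volume 0 s := by
    intro s hs
    apply hδ.mono_set
    rw [Set.uIcc_of_le hs.1.le, Set.uIcc_of_le zero_le_one]
    exact Set.Icc_subset_Icc le_rfl hs.2
  rw [intervalIntegral.integral_of_le zero_le_one, intervalIntegral.integral_of_le zero_le_one]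
  have step1 : ∀ s ∈ Set.Ioc (0:ℝ) 1,
      (∫ u in (0:ℝ)..s, ψ u) * δ s
        = ∫ u in Set.Ioc (0:ℝ) 1, (Set.Iic s).indicator ψ u * δ s := by
    intro s hs
    rw [MeasureTheory.integral_mul_const, setIntegral_indicator measurableSet_Iic,
      Set.Ioc_inter_Iic, min_eq_right hs.2, intervalIntegral.integral_of_le hs.1.le]
  rw [setIntegral_congr_fun measurableSet_Ioc step1]
  have hInt : Integrable (Function.uncurry fun s u => (Set.Iic s).indicator ψ u * δ s)
      ((volume.restrict (Set.Ioc (0:ℝ) 1)).prod (volume.restrict (Set.Ioc (0:ℝ) 1))) := by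
    have hbase : Integrable (fun p : ℝ × ℝ => δ p.1 * ψ p.2)
        ((volume.restrict (Set.Ioc (0:ℝ) 1)).prod (volume.restrict (Set.Ioc (0:ℝ) 1))) :=
      Integrable.mul_prod hδ' hψ'
    have hE : MeasurableSet {p : ℝ × ℝ | p.2 ≤ p.1} :=
      measurableSet_le measurable_snd measurable_fst
    apply (hbase.indicator hE).congr
    refine Filter.EventuallyEq.of_eq (funext fun p => ?_)
    rcases p with ⟨s, u⟩
    simp only [Function.uncurry, Set.indicator_apply, Set.mem_Iic, Set.mem_setOf_eq]
    split_ifs <;> simp [mul_comm]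
  rw [MeasureTheory.integral_integral_swap hInt]
  apply setIntegral_congr_fun measurableSet_Ioc
  intro u hu
  have : ∀ s : ℝ, (Set.Iic s).indicator ψ u * δ s
      = (Set.Ici u).indicator (fun s => ψ u * δ s) s := by
    intro s
    simp only [Set.indicator_apply, Set.mem_Iic, Set.mem_Ici]
    split_ifs <;> simp
  simp_rw [this]
  rw [setIntegral_indicator measurableSet_Ici, MeasureTheory.integral_const_mul]
  congr 1
  have hseteq : Set.Ioc (0:ℝ) 1 ∩ Set.Ici u = Set.Icc u 1 := by
    ext x
    simp only [Set.mem_inter_iff, Set.mem_Ioc, Set.mem_Ici, Set.mem_Icc]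
    constructor
    · rintro ⟨⟨_, h2⟩, h3⟩; exact ⟨h3, h2⟩
    · rintro ⟨h1, h2⟩; exact ⟨⟨lt_of_lt_of_le hu.1 h1, h2⟩, h1⟩
  rw [hseteq, integral_Icc_eq_integral_Ioc, ← intervalIntegral.integral_of_le hu.2]
  rw [intervalIntegral.integral_interval_sub_left hδ (hmonoδ u hu)]

end ContourAux

/-- Contour integral lemma: let `γ` be a piecewise-`C¹` loop in a disk `D` (containing
`0` and `1` and no `n`-th root of unity other than `1`), avoiding `1`, based at `0`,
with winding number `1` around `1`.  With
`I_k(s) = ∫₀^s γ^k γ'/(γ^n - 1)` and `J_{k,ℓ} = ∫₀¹ (x^k - x^ℓ)/(x^n - 1) dx`: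
`∫_γ (I_k z^ℓ - I_ℓ z^k)/(z^n - 1) dz = (4πi/n) J_{k,ℓ}`. -/
theorem contour_integral_lemma (n : ℕ) (hn : 1 ≤ n) (k l : ℕ)
    (c : ℂ) (R : ℝ) (γ γ' : ℝ → ℂ)
    (h0 : (0 : ℂ) ∈ Metric.ball c R) (h1 : (1 : ℂ) ∈ Metric.ball c R)
    (hroots : ∀ w ∈ Metric.ball c R, w ^ n = 1 → w = 1)
    (hmaps : ∀ s ∈ Set.Icc (0 : ℝ) 1, γ s ∈ Metric.ball c R \ {1})
    (hcont : ContinuousOn γ (Set.Icc 0 1))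
    (S : Set ℝ) (hS : S.Finite)
    (hderiv : ∀ s ∈ Set.Icc (0 : ℝ) 1 \ S, HasDerivAt γ (γ' s) s)
    (hint : IntervalIntegrable γ' volume 0 1)
    (hstart : γ 0 = 0) (hend : γ 1 = 0)
    (hwind : (1 / (2 * Real.pi * Complex.I)) *
        ∫ s in (0 : ℝ)..1, γ' s / (γ s - 1) = 1) :
    ∫ s in (0 : ℝ)..1,
        ((∫ u in (0 : ℝ)..s, γ u ^ k * γ' u / (γ u ^ n - 1)) * γ s ^ l -
          (∫ u in (0 : ℝ)..s, γ u ^ l * γ' u / (γ u ^ n - 1)) * γ s ^ k) *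
          γ' s / (γ s ^ n - 1) =
      (4 * Real.pi * Complex.I / n) *
        ((∫ x in (0 : ℝ)..1, (x ^ k - x ^ l) / (x ^ n - 1) : ℝ) : ℂ) := by
  classical
  have hR : 0 < R := lt_of_le_of_lt dist_nonneg (Metric.mem_ball.1 h0)
  have hn0 : (n:ℂ) ≠ 0 := Nat.cast_ne_zero.mpr (by omega)
  have h2pi : (2 * Real.pi * Complex.I : ℂ) ≠ 0 := by
    simp [Real.pi_ne_zero, Complex.I_ne_zero]
  have hγb : ∀ s ∈ Set.Icc (0:ℝ) 1, γ s ∈ Metric.ball c R := fun s hs => (hmaps s hs).1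
  have hγ1 : ∀ s ∈ Set.Icc (0:ℝ) 1, γ s ≠ 1 := fun s hs => by
    have := (hmaps s hs).2; simpa using this
  have hQne : ∀ z ∈ Metric.ball c R, auxP n z ≠ 0 := by
    intro z hz hQ
    have h1' := auxP_mul n z
    rw [hQ, mul_zero] at h1'
    have hz1 : z = 1 := hroots z hz (by linear_combination -h1')
    rw [hz1, auxP_one] at hQ
    exact hn0 hQ
  -- differentiability of the auxiliary functions
  have hPdiff : ∀ m : ℕ, Differentiable ℂ (fun z : ℂ => auxP m z) := by
    intro m
    have : (fun z : ℂ => auxP m z) = fun z : ℂ => ∑ i ∈ Finset.range m, z ^ i := rfl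
    rw [this]
    exact Differentiable.fun_sum fun i _ => differentiable_pow i
  have hHdiff : ∀ m : ℕ, DifferentiableOn ℂ (auxH n m) (Metric.ball c R) := by
    intro m
    have he : auxH n m = fun z => ((n : ℂ) * auxP m z - ∑ j ∈ Finset.range n, auxP j z) /
        ((n : ℂ) * auxP n z) := rfl
    rw [he]
    apply DifferentiableOn.div
    · exact (((hPdiff m).const_mul _).sub
        (Differentiable.fun_sum fun j _ => hPdiff j)).differentiableOn
    · exact ((hPdiff n).const_mul _).differentiableOn
    · intro z hz; exact mul_ne_zero hn0 (hQne z hz)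
  have hHcont : ∀ m : ℕ, ContinuousOn (auxH n m) (Metric.ball c R) := fun m =>
    (hHdiff m).continuousOn
  -- primitives
  obtain ⟨Hk, hHk⟩ := exists_primitive (hHdiff k)
  obtain ⟨Hl, hHl⟩ := exists_primitive (hHdiff l)
  have hG : ∀ z ∈ Metric.ball c R, HasDerivAt (fun z => Hk z - Hl z)
      (auxH n k z - auxH n l z) z := fun z hz => (hHk z hz).sub (hHl z hz)
  have hGdiff : DifferentiableOn ℂ (fun z => Hk z - Hl z) (Metric.ball c R) :=
    fun z hz => ((hG z hz).differentiableAt).differentiableWithinAt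
  have hGcont : ContinuousOn (fun z : ℂ => Hk z - Hl z) (Metric.ball c R) := hGdiff.continuousOn
  have hgcont : ContinuousOn (fun z => auxH n k z - auxH n l z) (Metric.ball c R) :=
    (hHcont k).sub (hHcont l)
  have hKdiff : DifferentiableOn ℂ (dslope (fun z => Hk z - Hl z) 1) (Metric.ball c R) :=
    (Complex.differentiableOn_dslope (Metric.isOpen_ball.mem_nhds h1)).mpr hGdiff
  obtain ⟨KF, hKF⟩ := exists_primitive hKdiff
  have hHkdiff : DifferentiableOn ℂ Hk (Metric.ball c R) :=
    fun z hz => ((hHk z hz).differentiableAt).differentiableWithinAt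
  have hHldiff : DifferentiableOn ℂ Hl (Metric.ball c R) :=
    fun z hz => ((hHl z hz).differentiableAt).differentiableWithinAt
  have hTdiff : DifferentiableOn ℂ
      (fun z => (Hk z - Hk 0) * auxH n l z - (Hl z - Hl 0) * auxH n k z) (Metric.ball c R) :=
    ((hHkdiff.sub (differentiableOn_const _)).mul (hHdiff l)).sub
      ((hHldiff.sub (differentiableOn_const _)).mul (hHdiff k))
  obtain ⟨TF, hTF⟩ := exists_primitive hTdiff
  -- integrability facts
  have hIcc : Set.uIcc (0:ℝ) 1 = Set.Icc (0:ℝ) 1 := Set.uIcc_of_le zero_le_one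
  have hcomp : ∀ {f : ℂ → ℂ}, ContinuousOn f (Metric.ball c R) →
      ContinuousOn (fun s => f (γ s)) (Set.Icc (0:ℝ) 1) := fun hf =>
    hf.comp hcont (fun s hs => hγb s hs)
  have hinvcont : ContinuousOn (fun s => (γ s - 1)⁻¹) (Set.Icc (0:ℝ) 1) :=
    (hcont.sub continuousOn_const).inv₀ (fun s hs => sub_ne_zero.mpr (hγ1 s hs))
  have hψint : IntervalIntegrable (fun s => γ' s * (γ s - 1)⁻¹) volume 0 1 :=
    hint.mul_continuousOn (by rw [hIcc]; exact hinvcont)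
  have hδint : IntervalIntegrable (fun s => (auxH n k (γ s) - auxH n l (γ s)) * γ' s)
      volume 0 1 :=
    hint.continuousOn_mul (by rw [hIcc]; exact hcomp hgcont)
  have hWcont : ContinuousOn (fun s => ∫ u in (0:ℝ)..s, γ' u * (γ u - 1)⁻¹)
      (Set.Icc (0:ℝ) 1) := by
    rw [← hIcc]
    exact intervalIntegral.continuousOn_primitive_interval
      (by rw [hIcc]; exact (intervalIntegrable_iff_integrableOn_Icc_of_le zero_le_one).1 hψint)
  -- path integrals of functions with primitives
  have pathint : ∀ {f F : ℂ → ℂ}, ContinuousOn f (Metric.ball c R) →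
      (∀ z ∈ Metric.ball c R, HasDerivAt F (f z) z) → ∀ b ∈ Set.Icc (0:ℝ) 1,
      ∫ s in (0:ℝ)..b, f (γ s) * γ' s = F (γ b) - F (γ 0) := fun hf hF b hb =>
    ftc_path hS.countable hγb hcont hderiv hint hf hF hb
  have hmono : ∀ s ∈ Set.Icc (0:ℝ) 1, Set.uIcc (0:ℝ) s ⊆ Set.uIcc (0:ℝ) 1 := by
    intro s hs
    rw [hIcc, Set.uIcc_of_le hs.1]
    exact Set.Icc_subset_Icc le_rfl hs.2
  -- the winding number integral
  have hwind2 : ∫ s in (0:ℝ)..1, γ' s * (γ s - 1)⁻¹ = 2 * Real.pi * Complex.I := by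
    have h := congrArg (fun x : ℂ => (2 * Real.pi * Complex.I) * x) hwind
    simp only [mul_one] at h
    rw [← mul_assoc, mul_one_div, div_self h2pi, one_mul] at h
    rw [← h]
    exact intervalIntegral.integral_congr fun s _ => (div_eq_mul_inv (γ' s) (γ s - 1)).symm
  -- step 1 : closed form of the inner integrals
  have hIeq : ∀ (m : ℕ) (H : ℂ → ℂ), (∀ z ∈ Metric.ball c R, HasDerivAt H (auxH n m z) z) →
      ∀ s ∈ Set.Icc (0:ℝ) 1,
      (∫ u in (0:ℝ)..s, γ u ^ m * γ' u / (γ u ^ n - 1))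
        = (1/(n:ℂ)) * (∫ u in (0:ℝ)..s, γ' u * (γ u - 1)⁻¹) + (H (γ s) - H 0) := by
    intro m H hH s hs
    have hsubs : Set.uIcc (0:ℝ) s ⊆ Set.Icc (0:ℝ) 1 := by
      rw [Set.uIcc_of_le hs.1]; exact Set.Icc_subset_Icc le_rfl hs.2
    have hcongr : Set.EqOn (fun u => γ u ^ m * γ' u / (γ u ^ n - 1))
        (fun u => (1/(n:ℂ)) * (γ' u * (γ u - 1)⁻¹) + auxH n m (γ u) * γ' u)
        (Set.uIcc (0:ℝ) s) := by
      intro u hu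
      have hu1 : u ∈ Set.Icc (0:ℝ) 1 := hsubs hu
      exact aux_idA n m hn0 (γ u) (γ' u) (hγ1 u hu1) (hQne _ (hγb u hu1))
    rw [intervalIntegral.integral_congr hcongr]
    rw [intervalIntegral.integral_add
      ((hψint.mono_set (hmono s hs)).const_mul _)
      ((hint.mono_set (hmono s hs)).continuousOn_mul
        ((hcomp (hHcont m)).mono hsubs))]
    rw [intervalIntegral.integral_const_mul]
    congr 1
    have := pathint (hHcont m) hH s hs
    rw [hstart] at this
    exact this
  -- step 2 : rewrite the full integrand
  have main_congr : Set.EqOn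
      (fun s => ((∫ u in (0 : ℝ)..s, γ u ^ k * γ' u / (γ u ^ n - 1)) * γ s ^ l -
          (∫ u in (0 : ℝ)..s, γ u ^ l * γ' u / (γ u ^ n - 1)) * γ s ^ k) *
          γ' s / (γ s ^ n - 1))
      (fun s => (1/(n:ℂ)) * (-((∫ u in (0:ℝ)..s, γ' u * (γ u - 1)⁻¹) *
            ((auxH n k (γ s) - auxH n l (γ s)) * γ' s))
          + ((Hk (γ s) - Hl (γ s)) - (Hk 0 - Hl 0)) * (γ' s * (γ s - 1)⁻¹))
        + ((Hk (γ s) - Hk 0) * auxH n l (γ s) - (Hl (γ s) - Hl 0) * auxH n k (γ s)) * γ' s)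
      (Set.uIcc (0:ℝ) 1) := by
    intro s hs
    rw [hIcc] at hs
    simp only []
    rw [hIeq k Hk hHk s hs, hIeq l Hl hHl s hs]
    exact aux_big n k l hn0 (γ s) (hγ1 s hs) (hQne _ (hγb s hs))
      (∫ u in (0:ℝ)..s, γ' u * (γ u - 1)⁻¹) (Hk (γ s)) (Hk 0) (Hl (γ s)) (Hl 0) (γ' s)
  rw [intervalIntegral.integral_congr main_congr]
  -- integrability of the pieces
  have hWδint : IntervalIntegrable (fun s => (∫ u in (0:ℝ)..s, γ' u * (γ u - 1)⁻¹) *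
      ((auxH n k (γ s) - auxH n l (γ s)) * γ' s)) volume 0 1 := by
    have := hδint.continuousOn_mul (g := fun s => ∫ u in (0:ℝ)..s, γ' u * (γ u - 1)⁻¹)
      (by rw [hIcc]; exact hWcont)
    simpa [mul_assoc] using this
  have hGψint : IntervalIntegrable
      (fun s => ((Hk (γ s) - Hl (γ s)) - (Hk 0 - Hl 0)) * (γ' s * (γ s - 1)⁻¹)) volume 0 1 :=
    hψint.continuousOn_mul (by rw [hIcc]; exact (hcomp hGcont).sub continuousOn_const)
  have hTint : IntervalIntegrable
      (fun s => ((Hk (γ s) - Hk 0) * auxH n l (γ s) - (Hl (γ s) - Hl 0) * auxH n k (γ s)) * γ' s)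
      volume 0 1 :=
    hint.continuousOn_mul (by rw [hIcc]; exact hcomp hTdiff.continuousOn)
  have hnegint : IntervalIntegrable (fun s => -((∫ u in (0:ℝ)..s, γ' u * (γ u - 1)⁻¹) *
      ((auxH n k (γ s) - auxH n l (γ s)) * γ' s))) volume 0 1 := by
    exact hWδint.neg
  rw [intervalIntegral.integral_add ((hnegint.add hGψint).const_mul _) hTint]
  rw [intervalIntegral.integral_const_mul]
  rw [intervalIntegral.integral_add hnegint hGψint]
  rw [intervalIntegral.integral_neg]
  -- the three integrals
  have hTzero : ∫ s in (0:ℝ)..1,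
      ((Hk (γ s) - Hk 0) * auxH n l (γ s) - (Hl (γ s) - Hl 0) * auxH n k (γ s)) * γ' s = 0 := by
    have := pathint hTdiff.continuousOn hTF 1 ⟨zero_le_one, le_rfl⟩
    rw [hstart, hend] at this
    rw [this, sub_self]
  have hGψval : ∫ s in (0:ℝ)..1,
      ((Hk (γ s) - Hl (γ s)) - (Hk 0 - Hl 0)) * (γ' s * (γ s - 1)⁻¹)
      = ((Hk 1 - Hl 1) - (Hk 0 - Hl 0)) * (2 * Real.pi * Complex.I) := by
    have hsplit : Set.EqOn
        (fun s => ((Hk (γ s) - Hl (γ s)) - (Hk 0 - Hl 0)) * (γ' s * (γ s - 1)⁻¹))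
        (fun s => dslope (fun z => Hk z - Hl z) 1 (γ s) * γ' s
          + ((Hk 1 - Hl 1) - (Hk 0 - Hl 0)) * (γ' s * (γ s - 1)⁻¹))
        (Set.uIcc (0:ℝ) 1) := by
      intro s hs
      rw [hIcc] at hs
      simp only []
      rw [dslope_of_ne _ (hγ1 s hs), slope_def_field, div_eq_mul_inv]
      ring
    rw [intervalIntegral.integral_congr hsplit]
    have hKint : IntervalIntegrable
        (fun s => dslope (fun z => Hk z - Hl z) 1 (γ s) * γ' s) volume 0 1 :=
      hint.continuousOn_mul (by rw [hIcc]; exact hcomp hKdiff.continuousOn)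
    rw [intervalIntegral.integral_add hKint (hψint.const_mul _)]
    have hK0 : ∫ s in (0:ℝ)..1, dslope (fun z => Hk z - Hl z) 1 (γ s) * γ' s = 0 := by
      have := pathint hKdiff.continuousOn hKF 1 ⟨zero_le_one, le_rfl⟩
      rw [hstart, hend] at this
      rw [this, sub_self]
    rw [hK0, intervalIntegral.integral_const_mul, hwind2, zero_add]
  have hWδval : ∫ s in (0:ℝ)..1, (∫ u in (0:ℝ)..s, γ' u * (γ u - 1)⁻¹) *
        ((auxH n k (γ s) - auxH n l (γ s)) * γ' s)
      = -(((Hk 1 - Hl 1) - (Hk 0 - Hl 0)) * (2 * Real.pi * Complex.I)) := by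
    have hδeq : ∀ b ∈ Set.Icc (0:ℝ) 1,
        ∫ s in (0:ℝ)..b, (auxH n k (γ s) - auxH n l (γ s)) * γ' s
          = (Hk (γ b) - Hl (γ b)) - (Hk 0 - Hl 0) := by
      intro b hb
      have := pathint hgcont hG b hb
      rw [hstart] at this
      exact this
    rw [aux_parts _ _ hψint hδint]
    have hδ1 : ∫ s in (0:ℝ)..1, (auxH n k (γ s) - auxH n l (γ s)) * γ' s = 0 := by
      rw [hδeq 1 ⟨zero_le_one, le_rfl⟩, hend, sub_self]
    have hcongr2 : Set.EqOn
        (fun u => γ' u * (γ u - 1)⁻¹ *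
          ((∫ s in (0:ℝ)..1, (auxH n k (γ s) - auxH n l (γ s)) * γ' s) -
            ∫ s in (0:ℝ)..u, (auxH n k (γ s) - auxH n l (γ s)) * γ' s))
        (fun u => -(((Hk (γ u) - Hl (γ u)) - (Hk 0 - Hl 0)) * (γ' u * (γ u - 1)⁻¹)))
        (Set.uIcc (0:ℝ) 1) := by
      intro u hu
      rw [hIcc] at hu
      simp only []
      rw [hδ1, hδeq u hu]
      ring
    rw [intervalIntegral.integral_congr hcongr2, intervalIntegral.integral_neg, hGψval]
  rw [hTzero, hWδval, hGψval, add_zero, neg_neg]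
  -- value of G 1 - G 0 as the real integral
  have hσmaps : ∀ t ∈ Set.Icc (0:ℝ) 1, ((t:ℂ)) ∈ Metric.ball c R := by
    intro t ht
    have := (convex_ball c R) h0 h1 (by linarith [ht.2] : (0:ℝ) ≤ 1 - t) ht.1 (by ring)
    simpa [Complex.real_smul] using this
  have hσ : ∫ t in (0:ℝ)..1, (auxH n k ((t:ℝ):ℂ) - auxH n l ((t:ℝ):ℂ)) * 1
      = (Hk 1 - Hl 1) - (Hk 0 - Hl 0) := by
    have hd : ∀ t ∈ Set.Icc (0:ℝ) 1 \ (∅ : Set ℝ),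
        HasDerivAt (fun t : ℝ => ((t:ℝ):ℂ)) ((fun _ : ℝ => (1:ℂ)) t) t := by
      intro t _
      simpa using (hasDerivAt_id t).ofReal_comp
    have := ftc_path (γ := fun t : ℝ => ((t:ℝ):ℂ)) (γ' := fun _ => (1:ℂ))
      Set.countable_empty hσmaps (Complex.continuous_ofReal.continuousOn) hd
      intervalIntegrable_const hgcont hG ⟨zero_le_one, le_rfl⟩
    simpa using this
  have hGJ : (Hk 1 - Hl 1) - (Hk 0 - Hl 0)
      = ((∫ x in (0 : ℝ)..1, (x ^ k - x ^ l) / (x ^ n - 1) : ℝ) : ℂ) := by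
    rw [← hσ]
    have hcongr3 : Set.EqOn
        (fun t : ℝ => (auxH n k ((t:ℝ):ℂ) - auxH n l ((t:ℝ):ℂ)) * 1)
        (fun t : ℝ => (((auxP k t - auxP l t) / auxP n t : ℝ) : ℂ))
        (Set.uIcc (0:ℝ) 1) := by
      intro t ht
      rw [hIcc] at ht
      simp only [mul_one]
      rw [aux_gfun n k l hn0 _ (hQne _ (hσmaps t ht))]
      push_cast [auxP]
      norm_num
    rw [intervalIntegral.integral_congr hcongr3, intervalIntegral.integral_ofReal]
    congr 1
    apply intervalIntegral.integral_congr_ae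
    have h1ae : ∀ᵐ (x : ℝ), x ≠ (1:ℝ) := by
      refine MeasureTheory.ae_iff.2 ?_
      have : {x : ℝ | ¬ x ≠ 1} = {1} := by ext x; simp
      rw [this]
      exact Real.volume_singleton
    filter_upwards [h1ae] with x hx hmem
    rw [Set.uIoc_of_le zero_le_one] at hmem
    have hxlt : x < 1 := lt_of_le_of_ne hmem.2 hx
    have hxn : x ^ n - 1 ≠ 0 := by
      have : x ^ n < 1 := pow_lt_one₀ (le_of_lt hmem.1) hxlt (by omega)
      linarith
    have hQx : auxP n x ≠ 0 := by
      intro h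
      apply hxn
      rw [← auxP_mul n x, h, mul_zero]
    rw [div_eq_div_iff hQx hxn]
    linear_combination auxP n x * auxP_mul k x - auxP n x * auxP_mul l x
      - (auxP k x - auxP l x) * auxP_mul n x
  rw [hGJ]
  field_simp
  ring
end

section
/- Let n ≥ 1 and k ≥ 0 be integers and let z ∈ ℂ with |z| < 1. Then ∫₀¹ z·(tz)^k/((tz)^n − 1) dt = ∫₀¹ z·((tz)^k − (tz)^{n−1})/((tz)^n − 1) dt + (1/n)·Log(1 − z^n), where Log denotes the principal branch of the complex logarithm. -/
open Complex

/-- Decomposition `I_k(z) = f_k(z) + (1/n)·Log(1 - z^n)` along the segment from `0`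
to `z`, for `|z| < 1`:
`∫₀¹ z (tz)^k/((tz)^n - 1) dt = ∫₀¹ z ((tz)^k - (tz)^{n-1})/((tz)^n - 1) dt
  + (1/n)·Log(1 - z^n)`. -/
theorem I_eq_f_add_log (n : ℕ) (hn : 1 ≤ n) (k : ℕ) (z : ℂ) (hz : ‖z‖ < 1) :
    ∫ t in (0 : ℝ)..1, z * ((t : ℂ) * z) ^ k / (((t : ℂ) * z) ^ n - 1) =
      (∫ t in (0 : ℝ)..1,
          z * (((t : ℂ) * z) ^ k - ((t : ℂ) * z) ^ (n - 1)) / (((t : ℂ) * z) ^ n - 1)) +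
        (1 / (n : ℂ)) * Complex.log (1 - z ^ n) := by
  have hn0 : (n : ℂ) ≠ 0 := Nat.cast_ne_zero.mpr (by omega)
  have habs : ∀ t : ℝ, t ∈ Set.uIcc (0:ℝ) 1 → ‖((t:ℂ)*z)^n‖ < 1 := by
    intro t ht
    rw [Set.uIcc_of_le zero_le_one] at ht
    have h1 : ‖(t:ℂ)*z‖ < 1 := by
      rw [norm_mul, Complex.norm_real, Real.norm_eq_abs]
      calc |t| * ‖z‖ ≤ 1 * ‖z‖ := by
            apply mul_le_mul_of_nonneg_right _ (norm_nonneg z)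
            rw [abs_le]; exact ⟨by linarith [ht.1], ht.2⟩
        _ < 1 := by simpa using hz
    calc ‖((t:ℂ)*z)^n‖ = ‖(t:ℂ)*z‖ ^ n := norm_pow _ _
      _ < 1 := pow_lt_one₀ (norm_nonneg _) h1 (by omega)
  have hne : ∀ t : ℝ, t ∈ Set.uIcc (0:ℝ) 1 → (((t:ℂ)*z)^n - 1) ≠ 0 := by
    intro t ht
    refine sub_ne_zero.mpr fun h => ?_
    have := habs t ht
    rw [h] at this; simp at this
  -- continuity of denominators
  have hcontD : ContinuousOn (fun t : ℝ => ((t:ℂ)*z)^n - 1) (Set.uIcc (0:ℝ) 1) := by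
    fun_prop
  have hint1 : IntervalIntegrable
      (fun t : ℝ => z * ((t:ℂ)*z)^(n-1) / (((t:ℂ)*z)^n - 1)) MeasureTheory.volume 0 1 := by
    apply ContinuousOn.intervalIntegrable
    exact (ContinuousOn.div (by fun_prop) hcontD hne)
  have hint2 : IntervalIntegrable
      (fun t : ℝ => z * (((t:ℂ)*z)^k - ((t:ℂ)*z)^(n-1)) / (((t:ℂ)*z)^n - 1))
      MeasureTheory.volume 0 1 := by
    apply ContinuousOn.intervalIntegrable
    exact (ContinuousOn.div (by fun_prop) hcontD hne)
  have hsplit : ∫ t in (0:ℝ)..1, z * ((t:ℂ)*z)^k / (((t:ℂ)*z)^n - 1) =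
      (∫ t in (0:ℝ)..1, z * (((t:ℂ)*z)^k - ((t:ℂ)*z)^(n-1)) / (((t:ℂ)*z)^n - 1)) +
      ∫ t in (0:ℝ)..1, z * ((t:ℂ)*z)^(n-1) / (((t:ℂ)*z)^n - 1) := by
    rw [← intervalIntegral.integral_add hint2 hint1]
    apply intervalIntegral.integral_congr
    intro t ht
    have hD := hne t ht
    field_simp
    ring
  have hFTC : ∫ t in (0:ℝ)..1, z * ((t:ℂ)*z)^(n-1) / (((t:ℂ)*z)^n - 1) =
      (1 / (n : ℂ)) * Complex.log (1 - z ^ n) := by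
    have key := intervalIntegral.integral_eq_sub_of_hasDerivAt
      (f := fun t : ℝ => (1/(n:ℂ)) * Complex.log (1 - ((t:ℂ)*z)^n))
      (f' := fun t : ℝ => z * ((t:ℂ)*z)^(n-1) / (((t:ℂ)*z)^n - 1))
      (a := 0) (b := 1) ?_ hint1
    · rw [key]
      simp [zero_pow (by omega : n ≠ 0), Complex.log_one]
    · intro t ht
      have hD := hne t ht
      have hD' : (1 : ℂ) - ((t:ℂ)*z)^n ≠ 0 := fun h => hD (by
        rw [sub_eq_zero] at h ⊢; exact h.symm)
      have hmem : (1 : ℂ) - ((t:ℂ)*z)^n ∈ Complex.slitPlane := by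
        apply Complex.mem_slitPlane_iff.mpr
        left
        have hre : |(((t:ℂ)*z)^n).re| ≤ ‖((t:ℂ)*z)^n‖ := Complex.abs_re_le_norm _
        have := habs t ht
        simp only [Complex.sub_re, Complex.one_re]
        have : (((t:ℂ)*z)^n).re < 1 := lt_of_le_of_lt (le_trans (le_abs_self _) hre) this
        linarith
      have h1 : HasDerivAt (fun w : ℂ => w * z) z ((t:ℝ):ℂ) := hasDerivAt_mul_const z
      have h2 : HasDerivAt (fun w : ℂ => (w * z) ^ n) _ ((t:ℝ):ℂ) := h1.pow n
      have h3 := h2.const_sub (1 : ℂ)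
      have h4 := h3.clog hmem
      have h5 := (h4.const_mul (1/(n:ℂ))).comp_ofReal
      convert h5 using 1
      · rfl
      rw [show (1:ℂ) - ((t:ℂ)*z)^n = -(((t:ℂ)*z)^n - 1) by ring]
      field_simp
  exact hsplit.trans (by rw [hFTC])
end
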